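/- For every fixed real ν ≥ 0, one has I_ν(z) ~ e^z/√(2πz) as z → ∞; that is, the ratio I_ν(z) · √(2πz) · e^{−z} tends to 1 as z tends to infinity. -/

import Mathlib

/-- The modified Bessel function of the first kind of order `ν`, defined for `z > 0` by
`I_ν(z) = ∑_{k=0}^∞ (1/(k! Γ(ν+k+1))) (z/2)^(ν+2k)`. -/
noncomputable def besselI (ν z : ℝ) : ℝ :=
  ∑' k : ℕ, (1 / (k.factorial * Real.Gamma (ν + (k : ℝ) + 1))) * (z / 2) ^ (ν + 2 * (k : ℝ))

open MeasureTheory Real Set Filter intervalIntegral Nat Topology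

lemma myGamma_nat_add_half (k : ℕ) :
    Real.Gamma ((k : ℝ) + 1/2) = Real.sqrt π * (Nat.factorial (2*k) : ℝ) / (4^k * (k !)) := by
  induction k with
  | zero => simpa using Real.Gamma_one_half_eq
  | succ n ih =>
    have h : ((n+1 : ℕ) : ℝ) + 1/2 = ((n:ℝ) + 1/2) + 1 := by push_cast; ring
    rw [h, Real.Gamma_add_one (by positivity), ih]
    have h2 : (Nat.factorial (2*(n+1)) : ℝ) = (2*n+2) * (2*n+1) * (Nat.factorial (2*n) : ℝ) := by
      have : 2*(n+1) = (2*n+1) + 1 := by ring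
      rw [this, Nat.factorial_succ]
      push_cast [Nat.factorial_succ]
      ring
    rw [h2]
    have h3 : (((n+1) !) : ℝ) = (n+1) * (n !) := by push_cast [Nat.factorial_succ]; ring
    have hn : (0:ℝ) < (n !) := by positivity
    rw [h3]
    field_simp [h3]
    ring

lemma beta_intervalIntegrable {a b : ℝ} (ha : 0 < a) (hb : 0 < b) :
    IntervalIntegrable (fun x : ℝ => x ^ (a-1) * (1-x) ^ (b-1)) volume 0 1 := by
  have h := (Complex.betaIntegral_convergent (u := (a:ℂ)) (v := (b:ℂ))
    (by simpa using ha) (by simpa using hb)).norm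
  apply h.congr
  rw [Set.uIoc_of_le (zero_le_one (α := ℝ))]
  intro x hx
  have hx0 : (0:ℝ) ≤ x := le_of_lt hx.1
  have hx1 : (0:ℝ) ≤ 1 - x := by linarith [hx.2]
  show ‖_‖ = _
  rw [show (1 - (x:ℂ)) = ((1 - x : ℝ) : ℂ) by push_cast; ring,
      show ((a:ℂ) - 1) = ((a - 1 : ℝ) : ℂ) by push_cast; ring,
      show ((b:ℂ) - 1) = ((b - 1 : ℝ) : ℂ) by push_cast; ring,
      ← Complex.ofReal_cpow hx0, ← Complex.ofReal_cpow hx1, ← Complex.ofReal_mul,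
      Complex.norm_real, Real.norm_of_nonneg (by positivity)]

lemma beta_eq {a b : ℝ} (ha : 0 < a) (hb : 0 < b) :
    ∫ x in (0:ℝ)..1, x ^ (a-1) * (1-x) ^ (b-1)
      = Real.Gamma a * Real.Gamma b / Real.Gamma (a+b) := by
  have h := Complex.Gamma_mul_Gamma_eq_betaIntegral (s := (a:ℂ)) (t := (b:ℂ))
    (by simpa using ha) (by simpa using hb)
  have h2 : Complex.betaIntegral a b
      = ((∫ x in (0:ℝ)..1, x ^ (a-1) * (1-x) ^ (b-1) : ℝ) : ℂ) := by
    rw [Complex.betaIntegral, ← intervalIntegral.integral_ofReal]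
    apply intervalIntegral.integral_congr
    intro x hx
    rw [Set.uIcc_of_le (by norm_num : (0:ℝ) ≤ 1)] at hx
    have hx0 : (0:ℝ) ≤ x := hx.1
    have hx1 : (0:ℝ) ≤ 1 - x := by linarith [hx.2]
    show (x:ℂ) ^ ((a:ℂ)-1) * (1-(x:ℂ)) ^ ((b:ℂ)-1) = _
    rw [show (1 - (x:ℂ)) = ((1 - x : ℝ) : ℂ) by push_cast; ring,
        show ((a:ℂ) - 1) = ((a - 1 : ℝ) : ℂ) by push_cast; ring,
        show ((b:ℂ) - 1) = ((b - 1 : ℝ) : ℂ) by push_cast; ring,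
        ← Complex.ofReal_cpow hx0, ← Complex.ofReal_cpow hx1, ← Complex.ofReal_mul]
  have h3 : ((a:ℂ) + b) = ((a + b : ℝ) : ℂ) := by push_cast; ring
  rw [h2, h3, Complex.Gamma_ofReal, Complex.Gamma_ofReal, Complex.Gamma_ofReal,
    ← Complex.ofReal_mul, ← Complex.ofReal_mul] at h
  have h4 := Complex.ofReal_injective h
  have hG : Real.Gamma (a+b) ≠ 0 := (Real.Gamma_pos_of_pos (by linarith)).ne'
  field_simp
  linarith [h4]

lemma besselI_rep {ν z : ℝ} (hν : 0 ≤ ν) (hz : 0 < z) :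
    besselI ν z = (z/2) ^ ν / (Real.sqrt π * Real.Gamma (ν + 1/2))
      * ∫ x in Ioo (0:ℝ) 1, Real.cosh (z * Real.sqrt x) * x ^ (-(1/2) : ℝ) * (1-x) ^ (ν - 1/2) := by
  have hb : (0:ℝ) < ν + 1/2 := by linarith
  set F : ℕ → ℝ → ℝ := fun k x =>
    z ^ (2*k) / ((2*k)! : ℝ) * (x ^ ((k:ℝ) - 1/2) * (1-x) ^ (ν - 1/2)) with hF
  -- integrability
  have intg : ∀ k : ℕ, IntegrableOn (fun x => x ^ ((k:ℝ) - 1/2) * (1-x) ^ (ν - 1/2))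
      (Ioo (0:ℝ) 1) := by
    intro k
    have h := beta_intervalIntegrable (a := (k:ℝ)+1/2) (b := ν+1/2) (by positivity) hb
    rw [intervalIntegrable_iff_integrableOn_Ioo_of_le zero_le_one] at h
    have e1 : (k:ℝ) + 1/2 - 1 = (k:ℝ) - 1/2 := by ring
    have e2 : ν + 1/2 - 1 = ν - 1/2 := by ring
    simpa only [e1, e2] using h
  -- values
  have val : ∀ k : ℕ, ∫ x in Ioo (0:ℝ) 1, x ^ ((k:ℝ) - 1/2) * (1-x) ^ (ν - 1/2)
      = Real.Gamma ((k:ℝ) + 1/2) * Real.Gamma (ν + 1/2) / Real.Gamma (ν + (k:ℝ) + 1) := by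
    intro k
    have h := beta_eq (a := (k:ℝ)+1/2) (b := ν+1/2) (by positivity) hb
    have e1 : (k:ℝ) + 1/2 - 1 = (k:ℝ) - 1/2 := by ring
    have e2 : ν + 1/2 - 1 = ν - 1/2 := by ring
    have e3 : (k:ℝ) + 1/2 + (ν + 1/2) = ν + (k:ℝ) + 1 := by ring
    rw [e1, e2, e3] at h
    rw [← h, intervalIntegral.integral_of_le zero_le_one, integral_Ioc_eq_integral_Ioo]
  -- summability of the norms of integrals
  have hsum0 : Summable (fun k : ℕ => z ^ (2*k) / ((2*k)! : ℝ)) := by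
    have h := Real.summable_pow_div_factorial z
    exact h.comp_injective (fun a b hab => by omega)
  set C : ℝ := ∫ x in Ioo (0:ℝ) 1, x ^ ((0:ℝ) - 1/2) * (1-x) ^ (ν - 1/2) with hC
  have intgC : IntegrableOn (fun x => x ^ ((0:ℝ) - 1/2) * (1-x) ^ (ν - 1/2)) (Ioo (0:ℝ) 1) := by
    simpa using intg 0
  have hFle : ∀ k : ℕ, ∫ x in Ioo (0:ℝ) 1, ‖F k x‖ ≤ z ^ (2*k) / ((2*k)! : ℝ) * C := by
    intro k
    have hcoef : 0 ≤ z ^ (2*k) / ((2*k)! : ℝ) := by positivity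
    rw [hC, ← MeasureTheory.integral_const_mul]
    apply setIntegral_mono_on
    · exact ((intg k).const_mul _).norm
    · exact intgC.const_mul _
    · exact measurableSet_Ioo
    · intro x hx
      have hx0 : (0:ℝ) < x := hx.1
      have hx1 : (0:ℝ) ≤ 1 - x := by linarith [hx.2.le]
      rw [Real.norm_of_nonneg (by positivity)]
      apply mul_le_mul_of_nonneg_left _ hcoef
      apply mul_le_mul_of_nonneg_right _ (by positivity)
      exact Real.rpow_le_rpow_of_exponent_ge hx0 hx.2.le (by
        have : (0:ℝ) ≤ (k:ℝ) := Nat.cast_nonneg k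
        linarith)
  have hnorm : Summable (fun k : ℕ => ∫ x in Ioo (0:ℝ) 1, ‖F k x‖) := by
    apply Summable.of_nonneg_of_le (fun k => integral_nonneg (fun x => norm_nonneg _)) hFle
    exact hsum0.mul_right C
  -- term-by-term integration
  have hInt : ∀ k : ℕ, Integrable (F k) (volume.restrict (Ioo (0:ℝ) 1)) := by
    intro k
    exact (intg k).const_mul _
  have swap := MeasureTheory.integral_tsum_of_summable_integral_norm hInt hnorm
  -- rewrite the integrand as a tsum
  have hcongr : ∫ x in Ioo (0:ℝ) 1, Real.cosh (z * Real.sqrt x) * x ^ (-(1/2) : ℝ) * (1-x) ^ (ν - 1/2)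
      = ∫ x in Ioo (0:ℝ) 1, (∑' k, F k x) := by
    apply setIntegral_congr_fun measurableSet_Ioo
    intro x hx
    have hx0 : (0:ℝ) < x := hx.1
    show Real.cosh (z * Real.sqrt x) * x ^ (-(1/2) : ℝ) * (1-x) ^ (ν - 1/2) = ∑' k, F k x
    rw [Real.cosh_eq_tsum, mul_assoc, ← tsum_mul_right]
    apply tsum_congr
    intro k
    show (z * Real.sqrt x) ^ (2*k) / ((2*k)! : ℝ) * (x ^ (-(1/2) : ℝ) * (1-x) ^ (ν - 1/2))
        = z ^ (2*k) / ((2*k)! : ℝ) * (x ^ ((k:ℝ) - 1/2) * (1-x) ^ (ν - 1/2))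
    have h1 : (z * Real.sqrt x) ^ (2*k) = z ^ (2*k) * x ^ k := by
      rw [mul_pow, pow_mul (Real.sqrt x), Real.sq_sqrt hx0.le]
    have h2 : x ^ ((k:ℝ) - 1/2) = x ^ (k : ℕ) * x ^ (-(1/2) : ℝ) := by
      rw [show (k:ℝ) - 1/2 = (k:ℝ) + (-(1/2)) by ring, Real.rpow_add hx0, Real.rpow_natCast]
    rw [h1, h2]
    ring
  -- now compute besselI
  rw [hcongr, ← swap, ← tsum_mul_left]
  apply tsum_congr
  intro k
  rw [MeasureTheory.integral_const_mul, val k, myGamma_nat_add_half k]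
  have hΓ1 : 0 < Real.Gamma (ν + (k:ℝ) + 1) := Real.Gamma_pos_of_pos (by positivity)
  have hΓ2 : 0 < Real.Gamma (ν + 1/2) := Real.Gamma_pos_of_pos hb
  have hπ : 0 < Real.sqrt π := Real.sqrt_pos.mpr Real.pi_pos
  have hfac : (0:ℝ) < (Nat.factorial k : ℝ) := by positivity
  have hfac2 : (0:ℝ) < ((2*k)! : ℝ) := by positivity
  rw [show ν + 2*(k:ℝ) = ν + ((2*k : ℕ):ℝ) by push_cast; ring]
  rw [Real.rpow_add (by positivity : (0:ℝ) < z/2), Real.rpow_natCast]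
  have hd : (z/2)^(2*k) = z^(2*k) / 2^(2*k) := div_pow z 2 (2*k)
  have h4 : ((4:ℝ))^k = 2^(2*k) := by rw [show (4:ℝ) = 2^2 by norm_num, ← pow_mul]
  rw [hd, h4]
  have h2 : (0:ℝ) < 2^(2*k) := by positivity
  field_simp

-- base ∈ [1,2], any exponent
lemma rpow_base_bound {x s : ℝ} (h1 : 1 ≤ x) (h2 : x ≤ 2) : x ^ s ≤ 2 ^ s + 1 := by
  rcases le_or_gt 0 s with hs | hs
  · have := Real.rpow_le_rpow (by linarith) h2 hs
    have h2s : (0:ℝ) < 2 ^ s := Real.rpow_pos_of_pos two_pos s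
    linarith
  · have := Real.rpow_le_one_of_one_le_of_nonpos h1 hs.le
    have h2s : (0:ℝ) < 2 ^ s := Real.rpow_pos_of_pos two_pos s
    linarith

lemma W_meas {ν z : ℝ} : Measurable (fun t : ℝ => Real.exp (z*t) * (1-t^2) ^ (ν-1/2)) :=
  (Real.measurable_exp.comp (measurable_const.mul measurable_id)).mul
    ((measurable_const.sub (measurable_id.pow_const 2)).pow_const _)

lemma aux_int {ν : ℝ} (hν : 0 ≤ ν) (z : ℝ) :
    IntegrableOn (fun t : ℝ => Real.exp (z*t) * (1-t^2) ^ (ν-1/2)) (Ioo (0:ℝ) 1) := by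
  have hbase : IntegrableOn (fun t : ℝ => (1-t) ^ (ν-1/2)) (Ioo (0:ℝ) 1) := by
    have h := beta_intervalIntegrable (a := (1:ℝ)) (b := ν+1/2) one_pos (by linarith)
    rw [intervalIntegrable_iff_integrableOn_Ioo_of_le zero_le_one] at h
    apply h.congr_fun ?_ measurableSet_Ioo
    intro x hx
    show x ^ ((1:ℝ)-1) * (1-x) ^ (ν+1/2-1) = (1-x) ^ (ν-1/2)
    rw [show ((1:ℝ)-1) = 0 by norm_num, Real.rpow_zero, one_mul,
      show ν+1/2-1 = ν-1/2 by ring]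
  set M : ℝ := Real.exp |z| * (2 ^ (ν-1/2) + 1) with hM
  apply Integrable.mono' (hbase.const_mul M) (W_meas.aestronglyMeasurable.restrict)
  rw [ae_restrict_iff' measurableSet_Ioo]
  filter_upwards with t ht
  have ht0 : (0:ℝ) < t := ht.1
  have ht1 : t < 1 := ht.2
  have hsq : (0:ℝ) < 1 - t^2 := by nlinarith
  rw [Real.norm_of_nonneg (by positivity)]
  have hsplit : (1 - t^2 : ℝ) = (1-t) * (1+t) := by ring
  rw [hsplit, Real.mul_rpow (by linarith) (by linarith)]
  have hexp : Real.exp (z*t) ≤ Real.exp |z| := by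
    apply Real.exp_le_exp.2
    calc z*t ≤ |z*t| := le_abs_self _
    _ = |z| * |t| := abs_mul z t
    _ ≤ |z| * 1 := by
        apply mul_le_mul_of_nonneg_left _ (abs_nonneg z)
        rw [abs_of_pos ht0]; exact ht1.le
    _ = |z| := mul_one _
  have hplus : (1+t) ^ (ν-1/2) ≤ 2 ^ (ν-1/2) + 1 :=
    rpow_base_bound (by linarith) (by linarith)
  have h1 : (0:ℝ) ≤ (1-t) ^ (ν-1/2) := Real.rpow_nonneg (by linarith) _
  have h2 : (0:ℝ) ≤ (1+t) ^ (ν-1/2) := Real.rpow_nonneg (by linarith) _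
  calc Real.exp (z*t) * ((1-t) ^ (ν-1/2) * (1+t) ^ (ν-1/2))
      ≤ Real.exp |z| * ((1-t) ^ (ν-1/2) * (2 ^ (ν-1/2) + 1)) := by
        apply mul_le_mul hexp (mul_le_mul_of_nonneg_left hplus h1)
          (mul_nonneg h1 h2) (Real.exp_pos _).le
    _ = M * (1-t) ^ (ν-1/2) := by rw [hM]; ring

lemma subst_lemma (s : ℝ) {z : ℝ} (hz : 0 < z) :
    ∫ t in (0:ℝ)..1, Real.exp (z*t) * (1-t^2) ^ s
      = z⁻¹ * (Real.exp z * z ^ (-s) *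
          ∫ u in (0:ℝ)..z, Real.exp (-u) * u ^ s * (2-u/z) ^ s) := by
  have hz' : z ≠ 0 := hz.ne'
  have key := intervalIntegral.integral_comp_mul_add
      (f := fun t => Real.exp (z*t) * (1-t^2) ^ s) (a := 0) (b := z)
      (c := -z⁻¹) (neg_ne_zero.2 (inv_ne_zero hz')) 1
  -- key : ∫ u in 0..z, f (-z⁻¹ * u + 1) = (-z⁻¹)⁻¹ • ∫ x in (-z⁻¹*0+1)..(-z⁻¹*z+1), f x
  have e1 : -z⁻¹ * 0 + 1 = (1:ℝ) := by ring
  have e2 : -z⁻¹ * z + 1 = (0:ℝ) := by field_simp; ring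
  rw [e1, e2] at key
  have e3 : ((-z⁻¹)⁻¹ : ℝ) = -z := by field_simp
  have hsym := intervalIntegral.integral_symm (a := (0:ℝ)) (b := 1)
    (f := fun t => Real.exp (z*t) * (1-t^2) ^ s) (μ := volume)
  rw [e3, hsym, smul_eq_mul] at key
  -- key : ∫ u in 0..z, f (-z⁻¹*u+1) = -z * -(∫ x in 0..1, f x)
  have key2 : ∫ u in (0:ℝ)..z, Real.exp (z * (-z⁻¹ * u + 1)) * (1-(-z⁻¹ * u + 1)^2) ^ s
      = z * ∫ t in (0:ℝ)..1, Real.exp (z*t) * (1-t^2) ^ s := by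
    rw [key]; ring
  have congr1 : ∫ u in (0:ℝ)..z, Real.exp (z * (-z⁻¹ * u + 1)) * (1-(-z⁻¹ * u + 1)^2) ^ s
      = ∫ u in (0:ℝ)..z, (Real.exp z * z ^ (-s)) * (Real.exp (-u) * u ^ s * (2-u/z) ^ s) := by
    apply intervalIntegral.integral_congr
    intro u hu
    rw [Set.uIcc_of_le hz.le] at hu
    show Real.exp (z * (-z⁻¹ * u + 1)) * (1-(-z⁻¹ * u + 1)^2) ^ s
        = (Real.exp z * z ^ (-s)) * (Real.exp (-u) * u ^ s * (2-u/z) ^ s)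
    have hu0 : 0 ≤ u := hu.1
    have huz : u ≤ z := hu.2
    have h1 : z * (-z⁻¹ * u + 1) = z - u := by field_simp; ring
    have h2 : (1-(-z⁻¹ * u + 1)^2 : ℝ) = (u/z) * (2 - u/z) := by field_simp; ring
    have h3 : 0 ≤ u/z := by positivity
    have h4 : (0:ℝ) ≤ 2 - u/z := by
      have : u/z ≤ 1 := (div_le_one hz).2 huz
      linarith
    rw [h1, h2, Real.mul_rpow h3 h4, Real.div_rpow hu0 hz.le, Real.exp_sub]
    rw [Real.rpow_neg hz.le]
    have hzs : z ^ s ≠ 0 := (Real.rpow_pos_of_pos hz s).ne'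
    have hee : Real.exp (-u) * Real.exp u = 1 := by rw [← Real.exp_add]; simp
    field_simp
    linear_combination (-(u ^ s * ((2*z-u)/z) ^ s)) * hee
  rw [congr1, intervalIntegral.integral_const_mul] at key2
  rw [key2]
  field_simp

lemma G_tendsto {ν : ℝ} (hν : 0 ≤ ν) :
    Tendsto (fun z : ℝ => ∫ u in (0:ℝ)..z, Real.exp (-u) * u ^ (ν-1/2) * (2-u/z) ^ (ν-1/2))
      atTop (𝓝 (2 ^ (ν-1/2) * Real.Gamma (ν+1/2))) := by
  have hb : (0:ℝ) < ν + 1/2 := by linarith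
  set f : ℝ → ℝ := fun u => Set.indicator (Ioi (0:ℝ))
    (fun u => Real.exp (-u) * u ^ (ν-1/2) * 2 ^ (ν-1/2)) u with hf
  set F : ℝ → ℝ → ℝ := fun z u => Set.indicator (Ioc (0:ℝ) z)
    (fun u => Real.exp (-u) * u ^ (ν-1/2) * (2-u/z) ^ (ν-1/2)) u with hF
  have hGam : IntegrableOn (fun u : ℝ => Real.exp (-u) * u ^ (ν-1/2)) (Ioi (0:ℝ)) := by
    have h := Real.GammaIntegral_convergent hb
    simpa only [show ν + 1/2 - 1 = ν - 1/2 by ring] using h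
  have hmeasW : ∀ z : ℝ, Measurable (fun u : ℝ =>
      Real.exp (-u) * u ^ (ν-1/2) * (2-u/z) ^ (ν-1/2)) := fun z =>
    ((Real.measurable_exp.comp measurable_neg).mul (measurable_id.pow_const _)).mul
      ((measurable_const.sub (measurable_id.div_const z)).pow_const _)
  -- value of the limit integral
  have hval : ∫ u, f u = 2 ^ (ν-1/2) * Real.Gamma (ν+1/2) := by
    simp only [hf]
    rw [MeasureTheory.integral_indicator measurableSet_Ioi, MeasureTheory.integral_mul_const,
      Real.Gamma_eq_integral hb]
    rw [show ν + 1/2 - 1 = ν - 1/2 by ring]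
    ring
  have key : Tendsto (fun z : ℝ => ∫ u, F z u) atTop (𝓝 (∫ u, f u)) := by
    apply MeasureTheory.tendsto_integral_filter_of_dominated_convergence
      (bound := Set.indicator (Ioi (0:ℝ)) (fun u => (2 ^ (ν-1/2) + 1) * (Real.exp (-u) * u ^ (ν-1/2))))
    · filter_upwards with z
      exact ((hmeasW z).indicator measurableSet_Ioc).aestronglyMeasurable
    · filter_upwards [eventually_ge_atTop (1:ℝ)] with z hz1
      filter_upwards with u
      have hz : (0:ℝ) < z := lt_of_lt_of_le one_pos hz1
      simp only [hF]
      by_cases hu : u ∈ Ioc (0:ℝ) z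
      · rw [Set.indicator_of_mem hu, Set.indicator_of_mem (Ioc_subset_Ioi_self hu)]
        have hu0 : 0 < u := hu.1
        have huz : u ≤ z := hu.2
        have hq1 : u/z ≤ 1 := (div_le_one hz).2 huz
        have hq0 : 0 < u/z := div_pos hu0 hz
        have hbase1 : (1:ℝ) ≤ 2 - u/z := by linarith
        have hbase2 : (2:ℝ) - u/z ≤ 2 := by linarith
        rw [Real.norm_of_nonneg (by positivity)]
        have := rpow_base_bound hbase1 hbase2 (s := ν-1/2)
        calc Real.exp (-u) * u ^ (ν-1/2) * (2-u/z) ^ (ν-1/2)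
            ≤ Real.exp (-u) * u ^ (ν-1/2) * (2 ^ (ν-1/2) + 1) := by
              apply mul_le_mul_of_nonneg_left this (by positivity)
          _ = (2 ^ (ν-1/2) + 1) * (Real.exp (-u) * u ^ (ν-1/2)) := by ring
      · rw [Set.indicator_of_notMem hu, norm_zero]
        apply Set.indicator_nonneg
        intro x hx
        have : (0:ℝ) < x := hx
        positivity
    · exact MeasureTheory.IntegrableOn.integrable_indicator (hGam.const_mul _) measurableSet_Ioi
    · have hae : ∀ᵐ (u : ℝ), u ≠ 0 := by
        have h0 : {u : ℝ | ¬ u ≠ 0} = {0} := by ext u; simp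
        rw [ae_iff, h0]
        exact measure_singleton 0
      filter_upwards [hae] with u hu
      rcases hu.lt_or_gt with hneg | hpos
      · have h1 : ∀ z : ℝ, F z u = 0 := by
          intro z
          simp only [hF]
          rw [Set.indicator_of_notMem (by simp [Set.mem_Ioc]; intro h; linarith)]
        have h2 : f u = 0 := by
          simp only [hf]
          rw [Set.indicator_of_notMem (by simp [Set.mem_Ioi]; linarith)]
        simpa [h2] using tendsto_const_nhds.congr (fun z => (h1 z).symm)
      · have h2 : f u = Real.exp (-u) * u ^ (ν-1/2) * 2 ^ (ν-1/2) := by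
          simp only [hf]
          rw [Set.indicator_of_mem (by exact hpos)]
        rw [h2]
        apply Tendsto.congr' (f₁ := fun z =>
          Real.exp (-u) * u ^ (ν-1/2) * (2-u/z) ^ (ν-1/2))
        · filter_upwards [eventually_ge_atTop u] with z hz
          simp only [hF]
          rw [Set.indicator_of_mem (by exact ⟨hpos, hz⟩)]
        · apply Tendsto.const_mul
          have hdiv : Tendsto (fun z : ℝ => u/z) atTop (𝓝 0) :=
            Tendsto.div_atTop tendsto_const_nhds tendsto_id
          have h2' : Tendsto (fun z : ℝ => 2 - u/z) atTop (𝓝 2) := by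
            simpa using tendsto_const_nhds.sub hdiv
          have := h2'.rpow_const (p := ν-1/2) (Or.inl two_ne_zero)
          exact this
  rw [← hval]
  apply key.congr'
  filter_upwards [eventually_ge_atTop (0:ℝ)] with z hz0
  simp only [hF]
  rw [MeasureTheory.integral_indicator measurableSet_Ioc, intervalIntegral.integral_of_le hz0]

-- substitution x = t^2
lemma sq_subst (ν z : ℝ) :
    ∫ x in Ioo (0:ℝ) 1, Real.cosh (z * Real.sqrt x) * x ^ (-(1/2) : ℝ) * (1-x) ^ (ν - 1/2)
      = ∫ t in Ioo (0:ℝ) 1, 2 * Real.cosh (z*t) * (1-t^2) ^ (ν - 1/2) := by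
  have himg : (fun t : ℝ => t^2) '' Ioo 0 1 = Ioo 0 1 := by
    ext x
    constructor
    · rintro ⟨t, ⟨ht0, ht1⟩, rfl⟩
      refine ⟨by positivity, ?_⟩
      show t^2 < 1
      nlinarith
    · rintro ⟨hx0, hx1⟩
      refine ⟨Real.sqrt x, ⟨Real.sqrt_pos.2 hx0, ?_⟩, Real.sq_sqrt hx0.le⟩
      nlinarith [Real.sq_sqrt hx0.le, Real.sqrt_nonneg x]
  have hderiv : ∀ t ∈ Ioo (0:ℝ) 1, HasDerivWithinAt (fun t : ℝ => t^2) (2*t) (Ioo 0 1) t := by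
    intro t _
    simpa using (hasDerivAt_pow 2 t).hasDerivWithinAt
  have hinj : InjOn (fun t : ℝ => t^2) (Ioo 0 1) := by
    intro a ha b hb h
    simp only at h
    have h2 : (a-b)*(a+b) = 0 := by linear_combination h
    rcases mul_eq_zero.1 h2 with h3 | h3
    · linarith
    · linarith [ha.1, hb.1]
  have := integral_image_eq_integral_abs_deriv_smul measurableSet_Ioo hderiv hinj
    (fun x => Real.cosh (z * Real.sqrt x) * x ^ (-(1/2) : ℝ) * (1-x) ^ (ν - 1/2))
  rw [himg] at this
  rw [this]
  apply setIntegral_congr_fun measurableSet_Ioo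
  intro t ht
  have ht0 : (0:ℝ) < t := ht.1
  show |2*t| • (Real.cosh (z * Real.sqrt (t^2)) * (t^2) ^ (-(1/2) : ℝ) * (1-t^2) ^ (ν - 1/2))
      = 2 * Real.cosh (z*t) * (1-t^2) ^ (ν - 1/2)
  rw [Real.sqrt_sq ht0.le, abs_of_pos (by linarith), smul_eq_mul]
  have hpow : (t^2 : ℝ) ^ (-(1/2) : ℝ) = t⁻¹ := by
    rw [← Real.rpow_natCast t 2, ← Real.rpow_mul ht0.le,
      show ((2:ℕ):ℝ) * (-(1/2):ℝ) = -1 by norm_num, Real.rpow_neg_one]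
  rw [hpow]
  field_simp

lemma split_eq {ν : ℝ} (hν : 0 ≤ ν) (z : ℝ) :
    ∫ t in Ioo (0:ℝ) 1, 2 * Real.cosh (z*t) * (1-t^2) ^ (ν-1/2)
      = (∫ t in Ioo (0:ℝ) 1, Real.exp (z*t) * (1-t^2) ^ (ν-1/2))
        + ∫ t in Ioo (0:ℝ) 1, Real.exp ((-z)*t) * (1-t^2) ^ (ν-1/2) := by
  rw [← MeasureTheory.integral_add (aux_int hν z) (aux_int hν (-z))]
  apply setIntegral_congr_fun measurableSet_Ioo
  intro t _
  show 2 * Real.cosh (z*t) * (1-t^2) ^ (ν-1/2)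
      = Real.exp (z*t) * (1-t^2) ^ (ν-1/2) + Real.exp ((-z)*t) * (1-t^2) ^ (ν-1/2)
  rw [show (-z)*t = -(z*t) by ring, Real.cosh_eq]
  ring

lemma E_eq {ν : ℝ} (hν : 0 ≤ ν) {z : ℝ} (hz : 0 < z) :
    ∫ t in Ioo (0:ℝ) 1, Real.exp (z*t) * (1-t^2) ^ (ν-1/2)
      = z⁻¹ * (Real.exp z * z ^ (-(ν-1/2)) *
          ∫ u in (0:ℝ)..z, Real.exp (-u) * u ^ (ν-1/2) * (2-u/z) ^ (ν-1/2)) := by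
  rw [← MeasureTheory.integral_Ioc_eq_integral_Ioo, ← intervalIntegral.integral_of_le zero_le_one]
  exact subst_lemma (ν-1/2) hz

lemma scal1 {ν z : ℝ} (hz : 0 < z) (hΓ : 0 < Real.Gamma (ν+1/2)) :
    (z/2) ^ ν / (Real.sqrt π * Real.Gamma (ν+1/2)) * Real.sqrt (2*π*z)
      = 2 ^ ((1:ℝ)/2-ν) / Real.Gamma (ν+1/2) * z ^ (ν+(1:ℝ)/2) := by
  have hsπ : (0:ℝ) < Real.sqrt π := Real.sqrt_pos.mpr Real.pi_pos
  have h1 : (z/2) ^ ν = z ^ ν / 2 ^ ν := Real.div_rpow hz.le (by norm_num) ν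
  have h2 : Real.sqrt (2*π*z) = 2 ^ ((1:ℝ)/2) * Real.sqrt π * z ^ ((1:ℝ)/2) := by
    rw [show 2*π*z = 2*(π*z) by ring, Real.sqrt_mul (by norm_num) (π*z),
        Real.sqrt_mul Real.pi_pos.le z, Real.sqrt_eq_rpow 2, Real.sqrt_eq_rpow z]
    ring
  have h3 : z ^ ν * z ^ ((1:ℝ)/2) = z ^ (ν+(1:ℝ)/2) := (Real.rpow_add hz _ _).symm
  have h4 : (2:ℝ) ^ ((1:ℝ)/2-ν) * 2 ^ ν = 2 ^ ((1:ℝ)/2) := by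
    rw [← Real.rpow_add two_pos]; norm_num
  have h2ν : (0:ℝ) < 2 ^ ν := Real.rpow_pos_of_pos two_pos ν
  rw [h1, h2, ← h3, ← h4]
  have c1 : (2:ℝ)^ν * ((2:ℝ)^ν)⁻¹ = 1 := mul_inv_cancel₀ h2ν.ne'
  have c2 : Real.sqrt π * (Real.sqrt π)⁻¹ = 1 := mul_inv_cancel₀ hsπ.ne'
  calc z ^ ν / 2 ^ ν / (Real.sqrt π * Real.Gamma (ν+1/2)) *
        (2 ^ ((1:ℝ)/2-ν) * 2 ^ ν * Real.sqrt π * z ^ ((1:ℝ)/2))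
      = (z ^ ν * 2 ^ ((1:ℝ)/2-ν) * z ^ ((1:ℝ)/2) * (Real.Gamma (ν+1/2))⁻¹) *
        ((2 ^ ν * ((2:ℝ)^ν)⁻¹) * (Real.sqrt π * (Real.sqrt π)⁻¹)) := by ring
    _ = (z ^ ν * 2 ^ ((1:ℝ)/2-ν) * z ^ ((1:ℝ)/2) * (Real.Gamma (ν+1/2))⁻¹) * (1 * 1) := by
        rw [c1, c2]
    _ = 2 ^ ((1:ℝ)/2-ν) / Real.Gamma (ν+1/2) * (z ^ ν * z ^ ((1:ℝ)/2)) := by ring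

theorem besselI_asymptotic_aux (ν : ℝ) (hν : 0 ≤ ν) :
    Filter.Tendsto (fun z : ℝ => besselI ν z * Real.sqrt (2 * Real.pi * z) * Real.exp (-z))
      Filter.atTop (nhds 1) := by
  have hΓ : 0 < Real.Gamma (ν+1/2) := Real.Gamma_pos_of_pos (by linarith)
  have hsπ : (0:ℝ) < Real.sqrt π := Real.sqrt_pos.mpr Real.pi_pos
  set G : ℝ → ℝ := fun z => ∫ u in (0:ℝ)..z, Real.exp (-u) * u ^ (ν-1/2) * (2-u/z) ^ (ν-1/2)
    with hG
  set D : ℝ → ℝ := fun z => ∫ t in Ioo (0:ℝ) 1, Real.exp ((-z)*t) * (1-t^2) ^ (ν-1/2) with hD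
  set A : ℝ := 2 ^ (-(ν-1/2)) / Real.Gamma (ν+1/2) with hA
  set ρ : ℝ → ℝ := fun z =>
    (z/2) ^ ν / (Real.sqrt π * Real.Gamma (ν+1/2)) * Real.sqrt (2*π*z) * Real.exp (-z) with hρ
  -- main identity
  have hmain : ∀ᶠ z in atTop,
      besselI ν z * Real.sqrt (2*π*z) * Real.exp (-z) = A * G z + ρ z * D z := by
    filter_upwards [eventually_ge_atTop (1:ℝ)] with z hz1
    have hz : (0:ℝ) < z := lt_of_lt_of_le one_pos hz1
    have hscal : (z/2) ^ ν / (Real.sqrt π * Real.Gamma (ν+1/2)) * Real.sqrt (2*π*z)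
        * Real.exp (-z) * (z⁻¹ * (Real.exp z * z ^ (-(ν-1/2)))) = A := by
      have e1 : Real.exp (-z) * Real.exp z = 1 := by rw [← Real.exp_add]; simp
      have e2 : z ^ (ν+(1:ℝ)/2) * (z⁻¹ * z ^ (-(ν-1/2))) = 1 := by
        rw [← Real.rpow_neg_one z, ← Real.rpow_add hz, ← Real.rpow_add hz,
          show ν+(1:ℝ)/2 + (-1 + -(ν-1/2)) = 0 by ring, Real.rpow_zero]
      calc (z/2) ^ ν / (Real.sqrt π * Real.Gamma (ν+1/2)) * Real.sqrt (2*π*z)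
            * Real.exp (-z) * (z⁻¹ * (Real.exp z * z ^ (-(ν-1/2))))
          = ((z/2) ^ ν / (Real.sqrt π * Real.Gamma (ν+1/2)) * Real.sqrt (2*π*z))
            * (Real.exp (-z) * Real.exp z) * (z⁻¹ * z ^ (-(ν-1/2))) := by ring
        _ = (2 ^ ((1:ℝ)/2-ν) / Real.Gamma (ν+1/2)) *
            (z ^ (ν+(1:ℝ)/2) * (z⁻¹ * z ^ (-(ν-1/2)))) * (Real.exp (-z) * Real.exp z) := by
            rw [scal1 hz hΓ]; ring
        _ = 2 ^ ((1:ℝ)/2-ν) / Real.Gamma (ν+1/2) := by rw [e1, e2]; ring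
        _ = A := by rw [hA, show (1:ℝ)/2-ν = -(ν-1/2) by ring]
    rw [besselI_rep hν hz, sq_subst, split_eq hν, E_eq hν hz]
    rw [hρ, hD, hG]
    simp only
    linear_combination (∫ u in (0:ℝ)..z, Real.exp (-u) * u ^ (ν-1/2) * (2-u/z) ^ (ν-1/2)) * hscal
  -- limits
  have hGl : Tendsto (fun z => A * G z) atTop (𝓝 1) := by
    have h := (G_tendsto hν).const_mul A
    have heq : A * (2 ^ (ν-1/2) * Real.Gamma (ν+1/2)) = 1 := by
      have h2 : (2:ℝ) ^ (-(ν-1/2)) * 2 ^ (ν-1/2) = 1 := by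
        rw [← Real.rpow_add two_pos]; norm_num
      calc A * (2 ^ (ν-1/2) * Real.Gamma (ν+1/2))
          = (2 ^ (-(ν-1/2)) * 2 ^ (ν-1/2)) * (Real.Gamma (ν+1/2) * (Real.Gamma (ν+1/2))⁻¹) := by
            rw [hA]; ring
        _ = 1 := by rw [h2, mul_inv_cancel₀ hΓ.ne', mul_one]
    rwa [heq] at h
  have hρl : Tendsto ρ atTop (𝓝 0) := by
    have h := (tendsto_rpow_mul_exp_neg_mul_atTop_nhds_zero (ν+(1:ℝ)/2) 1 one_pos).const_mul
      (2 ^ ((1:ℝ)/2-ν) / Real.Gamma (ν+1/2))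
    rw [mul_zero] at h
    apply h.congr'
    filter_upwards [eventually_ge_atTop (1:ℝ)] with z hz1
    have hz : (0:ℝ) < z := lt_of_lt_of_le one_pos hz1
    rw [hρ]
    simp only
    rw [scal1 hz hΓ]
    rw [show -1*z = -z by ring]
    ring
  have hDb : ∀ᶠ z in atTop, ρ z * D z ≤ ρ z * (∫ t in Ioo (0:ℝ) 1,
      Real.exp ((0:ℝ)*t) * (1-t^2) ^ (ν-1/2)) := by
    filter_upwards [eventually_ge_atTop (1:ℝ)] with z hz1
    have hz : (0:ℝ) < z := lt_of_lt_of_le one_pos hz1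
    have hρ0 : 0 ≤ ρ z := by
      rw [hρ]; simp only
      have h1 : (0:ℝ) ≤ (z/2) ^ ν := Real.rpow_nonneg (by linarith) ν
      positivity
    apply mul_le_mul_of_nonneg_left _ hρ0
    apply setIntegral_mono_on (aux_int hν (-z)) (aux_int hν 0) measurableSet_Ioo
    intro t ht
    apply mul_le_mul_of_nonneg_right _ (Real.rpow_nonneg (by nlinarith [ht.1, ht.2]) _)
    apply Real.exp_le_exp.2
    nlinarith [ht.1, ht.2]
  have hD0 : ∀ᶠ z in atTop, 0 ≤ ρ z * D z := by
    filter_upwards [eventually_ge_atTop (1:ℝ)] with z hz1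
    have hz : (0:ℝ) < z := lt_of_lt_of_le one_pos hz1
    have hρ0 : 0 ≤ ρ z := by
      rw [hρ]; simp only
      have h1 : (0:ℝ) ≤ (z/2) ^ ν := Real.rpow_nonneg (by linarith) ν
      positivity
    have hD0' : 0 ≤ D z := by
      rw [hD]; simp only
      apply setIntegral_nonneg measurableSet_Ioo
      intro t ht
      have : (0:ℝ) ≤ 1 - t^2 := by nlinarith [ht.1, ht.2]
      positivity
    positivity
  have hDl : Tendsto (fun z => ρ z * D z) atTop (𝓝 0) := by
    apply squeeze_zero' hD0 hDb
    have h := hρl.mul_const (∫ t in Ioo (0:ℝ) 1, Real.exp ((0:ℝ)*t) * (1-t^2) ^ (ν-1/2))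
    rwa [zero_mul] at h
  have := hGl.add hDl
  rw [add_zero] at this
  exact Tendsto.congr' (by filter_upwards [hmain] with z hz; exact hz.symm) this

theorem besselI_asymptotic (ν : ℝ) (hν : 0 ≤ ν) :
    Filter.Tendsto (fun z : ℝ => besselI ν z * Real.sqrt (2 * Real.pi * z) * Real.exp (-z))
      Filter.atTop (nhds 1) := by
  exact besselI_asymptotic_aux ν hν
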